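/- Let u > 0, c ∈ ℝ, and let y : (0,∞) → ℝ be twice differentiable with y″(ζ) = (u²·ζ + c/ζ²)·y(ζ) for all ζ > 0. Define V : (0,∞) → ℝ by V(ξ) = ζ(ξ)^{1/4}·y(ζ(ξ)) where ζ(ξ) = ((3/2)·ξ)^{2/3}. Then V is twice differentiable on (0,∞) and V″(ξ) = (u² + (16c−5)/(36ξ²))·V(ξ) for all ξ > 0. (The case c = 0 gives the coefficient −5/(36ξ²), corresponding to V = ζ^{1/4}·Ai(u^{2/3}ζ); the case c = 3/4 gives +7/(36ξ²), corresponding to Ṽ = ζ^{−1/4}·Ai′(u^{2/3}ζ).) -/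

import Mathlib

open Real

noncomputable def stmt11g (ξ : ℝ) : ℝ := ((3/2) * ξ) ^ ((2:ℝ)/3)

private lemma stmt11_pow_deriv {ξ : ℝ} (hξ : 0 < ξ) (a : ℝ) :
    HasDerivAt (fun t : ℝ => ((3/2) * t) ^ a)
      ((3/2) * a * ((3/2) * ξ) ^ (a - 1)) ξ := by
  have h1 : HasDerivAt (fun t : ℝ => (3/2) * t) (3/2) ξ := by
    simpa using (hasDerivAt_id ξ).const_mul (3/2 : ℝ)
  have h2 := (Real.hasDerivAt_rpow_const (x := (3/2) * ξ) (p := a)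
      (Or.inl (by positivity))).comp ξ h1
  refine h2.congr_deriv (Eq.symm ?_)
  ring

private lemma stmt11_g_deriv {ξ : ℝ} (hξ : 0 < ξ) :
    HasDerivAt stmt11g (((3/2) * ξ) ^ (-(1:ℝ)/3)) ξ := by
  have h := stmt11_pow_deriv hξ ((2:ℝ)/3)
  have e : (2:ℝ)/3 - 1 = -(1:ℝ)/3 := by norm_num
  rw [e] at h
  refine h.congr_deriv (Eq.symm ?_)
  ring

private lemma stmt11_term {ξ : ℝ} (hξ : 0 < ξ) (f : ℝ → ℝ)
    (hf : DifferentiableAt ℝ f (stmt11g ξ)) (a : ℝ) :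
    HasDerivAt (fun t : ℝ => ((3/2) * t) ^ a * f (stmt11g t))
      ((3/2) * a * ((3/2) * ξ) ^ (a - 1) * f (stmt11g ξ)
        + ((3/2) * ξ) ^ (a + -(1:ℝ)/3) * deriv f (stmt11g ξ)) ξ := by
  have h2 := hf.hasDerivAt.comp ξ (stmt11_g_deriv hξ)
  have h := (stmt11_pow_deriv hξ a).mul h2
  refine h.congr_deriv (Eq.symm ?_)
  rw [Real.rpow_add (by positivity : (0:ℝ) < (3/2) * ξ)]
  show _ = _ * (f ∘ stmt11g) ξ + _
  simp only [Function.comp_apply]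
  ring

theorem stmt11
    (u c : ℝ) (hu : 0 < u) (y : ℝ → ℝ)
    (hy : DifferentiableOn ℝ y (Set.Ioi 0))
    (hy' : DifferentiableOn ℝ (deriv y) (Set.Ioi 0))
    (hode : ∀ ζ ∈ Set.Ioi (0:ℝ),
      deriv (deriv y) ζ = (u^2 * ζ + c / ζ^2) * y ζ)
    (V : ℝ → ℝ)
    (hV : ∀ ξ ∈ Set.Ioi (0:ℝ),
      V ξ = (((3/2) * ξ) ^ ((2:ℝ)/3)) ^ ((1:ℝ)/4)
        * y (((3/2) * ξ) ^ ((2:ℝ)/3))) :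
    DifferentiableOn ℝ V (Set.Ioi 0) ∧
    DifferentiableOn ℝ (deriv V) (Set.Ioi 0) ∧
    ∀ ξ ∈ Set.Ioi (0:ℝ),
      deriv (deriv V) ξ = (u^2 + (16 * c - 5) / (36 * ξ^2)) * V ξ := by
  set W : ℝ → ℝ := fun t => ((3/2) * t) ^ ((1:ℝ)/6) * y (stmt11g t) with hWdef
  set W1 : ℝ → ℝ := fun t =>
      (1/4) * (((3/2) * t) ^ (-(5:ℝ)/6) * y (stmt11g t))
        + ((3/2) * t) ^ (-(1:ℝ)/6) * deriv y (stmt11g t) with hW1def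
  -- basic facts
  have hgpos : ∀ {ξ : ℝ}, 0 < ξ → stmt11g ξ ∈ Set.Ioi (0:ℝ) := by
    intro ξ hξ
    have : (0:ℝ) < (3/2) * ξ := by positivity
    exact Real.rpow_pos_of_pos this _
  have hydiff : ∀ {ξ : ℝ}, 0 < ξ → DifferentiableAt ℝ y (stmt11g ξ) := by
    intro ξ hξ
    exact hy.differentiableAt (isOpen_Ioi.mem_nhds (hgpos hξ))
  have hy'diff : ∀ {ξ : ℝ}, 0 < ξ → DifferentiableAt ℝ (deriv y) (stmt11g ξ) := by
    intro ξ hξ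
    exact hy'.differentiableAt (isOpen_Ioi.mem_nhds (hgpos hξ))
  -- derivative of W
  have hW1 : ∀ {ξ : ℝ}, 0 < ξ → HasDerivAt W (W1 ξ) ξ := by
    intro ξ hξ
    have hs : (0:ℝ) < (3/2) * ξ := by positivity
    have h := stmt11_term hξ y (hydiff hξ) ((1:ℝ)/6)
    have e1 : (1:ℝ)/6 - 1 = -(5:ℝ)/6 := by norm_num
    have e2 : (1:ℝ)/6 + -(1:ℝ)/3 = -(1:ℝ)/6 := by norm_num
    rw [e1, e2] at h
    convert h using 1
    simp only [hW1def]
    ring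
  -- derivative of W1
  have hW2 : ∀ {ξ : ℝ}, 0 < ξ → HasDerivAt W1
      (-(5/16) * ((3/2) * ξ) ^ (-(11:ℝ)/6) * y (stmt11g ξ)
        + ((3/2) * ξ) ^ (-(1:ℝ)/2) * deriv (deriv y) (stmt11g ξ)) ξ := by
    intro ξ hξ
    have hs : (0:ℝ) < (3/2) * ξ := by positivity
    have ha := (stmt11_term hξ y (hydiff hξ) (-(5:ℝ)/6)).const_mul (1/4 : ℝ)
    have hb := stmt11_term hξ (deriv y) (hy'diff hξ) (-(1:ℝ)/6)
    have h := ha.add hb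
    have e1 : -(5:ℝ)/6 - 1 = -(11:ℝ)/6 := by norm_num
    have e2 : -(5:ℝ)/6 + -(1:ℝ)/3 = -(7:ℝ)/6 := by norm_num
    have e3 : -(1:ℝ)/6 - 1 = -(7:ℝ)/6 := by norm_num
    have e4 : -(1:ℝ)/6 + -(1:ℝ)/3 = -(1:ℝ)/2 := by norm_num
    rw [e1, e2, e3, e4] at h
    refine h.congr_deriv (Eq.symm ?_)
    ring
  -- V agrees with W near each point of Ioi 0
  have hVW : ∀ {ξ : ℝ}, 0 < ξ → V =ᶠ[nhds ξ] W := by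
    intro ξ hξ
    filter_upwards [isOpen_Ioi.mem_nhds hξ] with t ht
    have hs : (0:ℝ) < (3/2) * t := by
      have := Set.mem_Ioi.mp ht; positivity
    rw [hV t ht, hWdef]
    simp only [stmt11g]
    rw [← Real.rpow_mul hs.le]
    norm_num
  have hdV : ∀ {ξ : ℝ}, 0 < ξ → deriv V ξ = W1 ξ := by
    intro ξ hξ
    rw [Filter.EventuallyEq.deriv_eq (hVW hξ), (hW1 hξ).deriv]
  have hdVW1 : ∀ {ξ : ℝ}, 0 < ξ → deriv V =ᶠ[nhds ξ] W1 := by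
    intro ξ hξ
    filter_upwards [isOpen_Ioi.mem_nhds hξ] with t ht
    exact hdV (Set.mem_Ioi.mp ht)
  refine ⟨?_, ?_, ?_⟩
  · intro ξ hξ
    exact (((hW1 (Set.mem_Ioi.mp hξ)).differentiableAt).congr_of_eventuallyEq
      (hVW (Set.mem_Ioi.mp hξ))).differentiableWithinAt
  · intro ξ hξ
    exact (((hW2 (Set.mem_Ioi.mp hξ)).differentiableAt).congr_of_eventuallyEq
      (hdVW1 (Set.mem_Ioi.mp hξ))).differentiableWithinAt
  · intro ξ hξ
    have hξ' := Set.mem_Ioi.mp hξ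
    have hs : (0:ℝ) < (3/2) * ξ := by positivity
    rw [Filter.EventuallyEq.deriv_eq (hdVW1 hξ'), (hW2 hξ').deriv]
    rw [hode _ (hgpos hξ'), hV ξ hξ]
    have hg2 : (stmt11g ξ)^2 = ((3/2) * ξ) ^ ((4:ℝ)/3) := by
      rw [stmt11g, ← Real.rpow_natCast (((3/2) * ξ) ^ ((2:ℝ)/3)) 2,
        ← Real.rpow_mul hs.le]
      norm_num
    have hgval : stmt11g ξ = ((3/2) * ξ) ^ ((2:ℝ)/3) := rfl
    have hq : (((3/2) * ξ) ^ ((2:ℝ)/3)) ^ ((1:ℝ)/4) = ((3/2) * ξ) ^ ((1:ℝ)/6) := by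
      rw [← Real.rpow_mul hs.le]; norm_num
    rw [hg2, hgval, hq]
    -- rpow arithmetic
    have r1 : ((3/2) * ξ) ^ (-(1:ℝ)/2) * ((3/2) * ξ) ^ ((2:ℝ)/3)
        = ((3/2) * ξ) ^ ((1:ℝ)/6) := by
      rw [← Real.rpow_add hs]; norm_num
    have r2 : ((3/2) * ξ) ^ (-(1:ℝ)/2) / ((3/2) * ξ) ^ ((4:ℝ)/3)
        = ((3/2) * ξ) ^ (-(11:ℝ)/6) := by
      rw [← Real.rpow_sub hs]; norm_num
    have r3 : ((3/2) * ξ) ^ (-(11:ℝ)/6)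
        = ((3/2) * ξ) ^ ((1:ℝ)/6) * (4 / (9 * ξ^2)) := by
      have : ((3/2) * ξ) ^ (-(11:ℝ)/6)
          = ((3/2) * ξ) ^ ((1:ℝ)/6) * ((3/2) * ξ) ^ (-(2:ℝ)) := by
        rw [← Real.rpow_add hs]; norm_num
      rw [this]
      congr 1
      rw [Real.rpow_neg hs.le, show ((2:ℝ)) = ((2:ℕ):ℝ) by norm_num,
        Real.rpow_natCast]
      field_simp
      ring
    have hξne : ξ ≠ 0 := ne_of_gt hξ'
    have expand :
        -(5/16) * ((3/2) * ξ) ^ (-(11:ℝ)/6) * y (((3/2) * ξ) ^ ((2:ℝ)/3))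
          + ((3/2) * ξ) ^ (-(1:ℝ)/2)
            * ((u^2 * ((3/2) * ξ) ^ ((2:ℝ)/3) + c / ((3/2) * ξ) ^ ((4:ℝ)/3))
                * y (((3/2) * ξ) ^ ((2:ℝ)/3)))
        = -(5/16) * ((3/2) * ξ) ^ (-(11:ℝ)/6) * y (((3/2) * ξ) ^ ((2:ℝ)/3))
          + u^2 * (((3/2) * ξ) ^ (-(1:ℝ)/2) * ((3/2) * ξ) ^ ((2:ℝ)/3))
              * y (((3/2) * ξ) ^ ((2:ℝ)/3))
          + c * (((3/2) * ξ) ^ (-(1:ℝ)/2) / ((3/2) * ξ) ^ ((4:ℝ)/3))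
              * y (((3/2) * ξ) ^ ((2:ℝ)/3)) := by ring
    rw [expand, r1, r2, r3]
    field_simp
    ring
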